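/- arXiv:2602.17903 — 5 statements merged into one kernel-verified Lean document; each statement's English description precedes it below -/
import Mathlib

section
/- Let ℓ be a positive integer. Then the real number ((1 + α^{-ℓ})/√5) · ((1 + β^{-ℓ})/√5) equals: −L_ℓ/5 if ℓ is odd; F_{ℓ/2}² if ℓ ≡ 2 (mod 4); and L_{ℓ/2}²/5 if ℓ ≡ 0 (mod 4). -/
/-- The Lucas numbers: `L 0 = 2`, `L 1 = 1`, `L (n+2) = L (n+1) + L n`. -/
def lucas : ℕ → ℕ
  | 0 => 2
  | 1 => 1
  | n + 2 => lucas (n + 1) + lucas n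

lemma lucas_binet (n : ℕ) :
    (lucas n : ℝ) = ((1 + Real.sqrt 5) / 2) ^ n + ((1 - Real.sqrt 5) / 2) ^ n := by
  have hs : Real.sqrt 5 ^ 2 = 5 := Real.sq_sqrt (by norm_num)
  induction n using Nat.twoStepInduction with
  | zero => norm_num [lucas]
  | one => simp [lucas]
  | more n ih1 ih2 =>
    have : (lucas (n + 2) : ℝ) = (lucas (n + 1) : ℝ) + (lucas n : ℝ) := by
      rw [lucas]; push_cast; ring
    rw [this, ih1, ih2]
    have ha : ((1 + Real.sqrt 5) / 2) ^ 2 = ((1 + Real.sqrt 5) / 2) + 1 := by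
      field_simp; nlinarith [hs]
    have hb : ((1 - Real.sqrt 5) / 2) ^ 2 = ((1 - Real.sqrt 5) / 2) + 1 := by
      field_simp; nlinarith [hs]
    linear_combination ((1 + Real.sqrt 5) / 2) ^ n * ha + ((1 - Real.sqrt 5) / 2) ^ n * hb
      - ((((1 + Real.sqrt 5) / 2) ^ n + ((1 - Real.sqrt 5) / 2) ^ n) / 2) * hs

lemma fib_binet (n : ℕ) :
    (Nat.fib n : ℝ) = (((1 + Real.sqrt 5) / 2) ^ n - ((1 - Real.sqrt 5) / 2) ^ n) / Real.sqrt 5 := by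
  have h := Real.coe_fib_eq n
  simpa [Real.goldenRatio, Real.goldenConj] using h

theorem stmt7 (ℓ : ℕ) (hℓ : 1 ≤ ℓ) :
    (((1 + ((1 + Real.sqrt 5) / 2) ^ (-(ℓ : ℤ))) / Real.sqrt 5) *
      ((1 + ((1 - Real.sqrt 5) / 2) ^ (-(ℓ : ℤ))) / Real.sqrt 5)) =
    if ℓ % 2 = 1 then -(lucas ℓ : ℝ) / 5
    else if ℓ % 4 = 2 then ((Nat.fib (ℓ / 2) : ℝ)) ^ 2
    else ((lucas (ℓ / 2) : ℝ)) ^ 2 / 5 := by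
  set s := Real.sqrt 5 with hsdef
  have hs : s ^ 2 = 5 := Real.sq_sqrt (by norm_num)
  have hspos : 0 < s := Real.sqrt_pos.mpr (by norm_num)
  set a : ℝ := (1 + s) / 2 with hadef
  set b : ℝ := (1 - s) / 2 with hbdef
  have hab : a * b = -1 := by rw [hadef, hbdef]; nlinarith [hs]
  have hainv : a⁻¹ = -b := by
    apply inv_eq_of_mul_eq_one_right; linarith [hab]
  have hbinv : b⁻¹ = -a := by
    apply inv_eq_of_mul_eq_one_right; nlinarith [hab]
  have hza : a ^ (-(ℓ : ℤ)) = (-b) ^ ℓ := by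
    rw [zpow_neg, zpow_natCast, ← inv_pow, hainv]
  have hzb : b ^ (-(ℓ : ℤ)) = (-a) ^ ℓ := by
    rw [zpow_neg, zpow_natCast, ← inv_pow, hbinv]
  rw [hza, hzb]
  have key : (1 + (-b) ^ ℓ) / s * ((1 + (-a) ^ ℓ) / s)
      = (1 + (-b) ^ ℓ) * (1 + (-a) ^ ℓ) / 5 := by
    rw [div_mul_div_comm, ← hs]; ring
  rw [key]
  rcases Nat.even_or_odd ℓ with he | ho
  · -- even case
    have h2 : ℓ % 2 = 0 := Nat.even_iff.mp he
    rw [if_neg (by omega)]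
    have hm : ℓ = (ℓ / 2) * 2 := by omega
    set m := ℓ / 2 with hmdef
    have hnb : (-b) ^ ℓ = (b ^ m) ^ 2 := by
      rw [he.neg_pow, hm, pow_mul]
    have hna : (-a) ^ ℓ = (a ^ m) ^ 2 := by
      rw [he.neg_pow, hm, pow_mul]
    rw [hnb, hna]
    rcases Nat.even_or_odd m with hme | hmo
    · -- m even, ℓ % 4 = 0
      have : ℓ % 4 ≠ 2 := by
        have := Nat.even_iff.mp hme; omega
      rw [if_neg this, lucas_binet]
      have habm : a ^ m * b ^ m = 1 := by
        rw [← mul_pow, hab, hme.neg_one_pow]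
      linear_combination ((a ^ m * b ^ m - 1) / 5) * habm
    · -- m odd, ℓ % 4 = 2
      have : ℓ % 4 = 2 := by
        have := Nat.odd_iff.mp hmo; omega
      rw [if_pos this, fib_binet]
      have habm : a ^ m * b ^ m = -1 := by
        rw [← mul_pow, hab, hmo.neg_one_pow]
      have hfsq : ((a ^ m - b ^ m) / s) ^ 2 = (a ^ m - b ^ m) ^ 2 / 5 := by
        rw [div_pow, hs]
      rw [hfsq]
      linear_combination ((a ^ m * b ^ m + 1) / 5) * habm
  · -- odd case
    have h2 : ℓ % 2 = 1 := Nat.odd_iff.mp ho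
    rw [if_pos h2, lucas_binet]
    have hnb : (-b) ^ ℓ = -(b ^ ℓ) := ho.neg_pow b
    have hna : (-a) ^ ℓ = -(a ^ ℓ) := ho.neg_pow a
    rw [hnb, hna]
    have habl : a ^ ℓ * b ^ ℓ = -1 := by
      rw [← mul_pow, hab, ho.neg_one_pow]
    linear_combination habl / 5
end

section
/- Let p and q be prime numbers and let n, m, x, y be nonnegative integers with n ≥ m, n ≥ 1, and F_n + F_m = p^x q^y. Then |α^n / (√5 · p^x q^y) − 1| < 4 / α^{n−m}, where α = (1+√5)/2. -/
private lemma myGold_cube : (4:ℝ) < ((1 + Real.sqrt 5)/2)^3 := by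
  nlinarith [Real.sq_sqrt (by norm_num : (5:ℝ) ≥ 0), Real.sqrt_nonneg 5,
    Real.lt_sqrt (by norm_num : (0:ℝ) ≤ 2) |>.mpr (by norm_num : (2:ℝ)^2 < 5)]

private lemma myGold_sq : ((1 + Real.sqrt 5)/2)^2 = (1 + Real.sqrt 5)/2 + 1 := by
  have h5 : Real.sqrt 5 ^ 2 = 5 := Real.sq_sqrt (by norm_num)
  nlinarith [h5]

private lemma myGold_key2 : 3 * ((1 + Real.sqrt 5)/2 + 1) < 4 * Real.sqrt 5 := by
  have h5 : Real.sqrt 5 ^ 2 = 5 := Real.sq_sqrt (by norm_num)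
  have h2 : 2 < Real.sqrt 5 := by nlinarith [Real.sqrt_nonneg 5]
  nlinarith

theorem stmt14 (p q : ℕ) (hp : p.Prime) (hq : q.Prime)
    (n m x y : ℕ) (hnm : m ≤ n) (hn : 1 ≤ n)
    (he : Nat.fib n + Nat.fib m = p ^ x * q ^ y) :
    |((1 + Real.sqrt 5) / 2) ^ n / (Real.sqrt 5 * ((p : ℝ) ^ x * (q : ℝ) ^ y)) - 1| <
      4 / ((1 + Real.sqrt 5) / 2) ^ (n - m) := by
  have h5 : Real.sqrt 5 ^ 2 = 5 := Real.sq_sqrt (by norm_num)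
  have h5nn : (0:ℝ) ≤ Real.sqrt 5 := Real.sqrt_nonneg 5
  have h5gt : 2 < Real.sqrt 5 := by nlinarith
  have h5lt : Real.sqrt 5 < 3 := by nlinarith
  set φ : ℝ := (1 + Real.sqrt 5)/2 with hφ
  set ψ : ℝ := (1 - Real.sqrt 5)/2 with hψ
  have hφ1 : 1 < φ := by rw [hφ]; nlinarith
  have hφ0 : 0 < φ := by linarith
  have hψabs : |ψ| ≤ 1 := by rw [abs_le, hψ]; constructor <;> nlinarith
  -- the natural number N
  have hN1 : 1 ≤ p ^ x * q ^ y := Nat.one_le_iff_ne_zero.mpr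
    (Nat.mul_ne_zero (pow_ne_zero _ hp.pos.ne') (pow_ne_zero _ hq.pos.ne'))
  -- cast of he
  have heR : ((p:ℝ) ^ x * (q:ℝ) ^ y) = (Nat.fib n : ℝ) + (Nat.fib m : ℝ) := by
    have := congrArg (Nat.cast : ℕ → ℝ) he
    push_cast at this
    linarith
  have h5ne : Real.sqrt 5 ≠ 0 := by positivity
  have hfib : ∀ k : ℕ, Real.sqrt 5 * (Nat.fib k : ℝ) = φ ^ k - ψ ^ k := by
    intro k
    rw [Real.coe_fib_eq, mul_div_cancel₀ _ h5ne]
  set D : ℝ := Real.sqrt 5 * ((p:ℝ) ^ x * (q:ℝ) ^ y) with hD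
  have hDval : D = φ ^ n - ψ ^ n + (φ ^ m - ψ ^ m) := by
    rw [hD, heR, mul_add, hfib, hfib]
  have hNR : (1:ℝ) ≤ (p:ℝ) ^ x * (q:ℝ) ^ y := by exact_mod_cast hN1
  have hDsqrt : Real.sqrt 5 ≤ D := le_mul_of_one_le_right h5nn hNR
  have hD0 : 0 < D := lt_of_lt_of_le (by linarith) hDsqrt
  -- bounds on powers
  have hψn : |ψ ^ n| ≤ 1 := by rw [abs_pow]; exact pow_le_one₀ (abs_nonneg _) hψabs
  have hψm : |ψ ^ m| ≤ 1 := by rw [abs_pow]; exact pow_le_one₀ (abs_nonneg _) hψabs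
  have hφm1 : 1 ≤ φ ^ m := one_le_pow₀ hφ1.le
  have hφmn : φ ^ m ≤ φ ^ n := pow_le_pow_right₀ hφ1.le hnm
  have hpowsub : φ ^ (n - m) * φ ^ m = φ ^ n := pow_sub_mul_pow φ hnm
  have hφnm0 : 0 < φ ^ (n - m) := pow_pos hφ0 _
  -- numerator bound
  have hnum : |φ ^ n - D| ≤ 3 * φ ^ m := by
    rw [hDval]
    have h1 : φ ^ n - (φ ^ n - ψ ^ n + (φ ^ m - ψ ^ m)) = ψ ^ n + ψ ^ m - φ ^ m := by ring
    rw [h1]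
    have := abs_le.mp hψn
    have := abs_le.mp hψm
    rw [abs_le]; constructor <;> linarith
  -- key inequality 3 φ^n < 4 D
  have hkey : 3 * φ ^ n < 4 * D := by
    rcases le_or_gt 3 n with h3 | h3
    · have hDge : φ ^ n - 1 ≤ D := by
        rw [hDval]
        have := abs_le.mp hψn
        have := abs_le.mp hψm
        linarith
      have hφ3 : (4:ℝ) < φ ^ 3 := myGold_cube
      have : φ ^ 3 ≤ φ ^ n := pow_le_pow_right₀ hφ1.le h3
      linarith
    · have h2 : n ≤ 2 := by omega
      have hle : φ ^ n ≤ φ ^ 2 := pow_le_pow_right₀ hφ1.le h2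
      have hφ2 : φ ^ 2 = φ + 1 := myGold_sq
      have := myGold_key2
      linarith
  -- finish
  have hrw : φ ^ n / D - 1 = (φ ^ n - D) / D := by field_simp
  rw [hrw, abs_div, abs_of_pos hD0, div_lt_div_iff₀ hD0 hφnm0]
  calc |φ ^ n - D| * φ ^ (n - m) ≤ 3 * φ ^ m * φ ^ (n - m) := by
        apply mul_le_mul_of_nonneg_right hnum hφnm0.le
    _ = 3 * φ ^ n := by rw [mul_assoc, mul_comm (φ ^ m), hpowsub]
    _ < 4 * D := hkey
end

section
/- Let p and q be prime numbers and let n, m, x, y be nonnegative integers with n ≥ m, n ≥ 1, and F_n + F_m = p^x q^y. Then |α^n · (1 + α^{−(n−m)}) / (√5 · p^x q^y) − 1| < 2 / α^n, where α = (1+√5)/2. -/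
open Real goldenRatio

set_option maxHeartbeats 1000000 in
lemma key15 (n m : ℕ) (hn : 1 ≤ n) (hnm : m ≤ n) :
    |ψ ^ n + ψ ^ m| * φ ^ n < 2 * (φ ^ n + φ ^ m - ψ ^ n - ψ ^ m) := by
  have h5 : (Real.sqrt 5) ^ 2 = 5 := Real.sq_sqrt (by norm_num)
  have h5l : 2.236 < Real.sqrt 5 := by nlinarith [Real.sqrt_nonneg 5]
  set P : ℝ := (Real.sqrt 5 - 1) / 2 with hP
  have hPpos : 0 < P := by rw [hP]; linarith
  have hP1 : P < 1 := by rw [hP]; nlinarith [Real.sqrt_nonneg 5]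
  have hPψ : ψ = -P := by rw [goldenConj, hP]; ring
  have hPφ : P * φ = 1 := by rw [hP, goldenRatio]; linear_combination h5 / 4
  have hφ1 : 1 < φ := one_lt_goldenRatio
  have hφpos : 0 < φ := goldenRatio_pos
  have hgold : 1.6 < φ := by rw [goldenRatio]; linarith
  have hca : (P ^ n) * (φ ^ n) = 1 := by rw [← mul_pow, hPφ, one_pow]
  have hdb : (P ^ m) * (φ ^ m) = 1 := by rw [← mul_pow, hPφ, one_pow]
  have hba : φ ^ m ≤ φ ^ n := pow_le_pow_right₀ hφ1.le hnm
  have hapos : 0 < φ ^ n := pow_pos hφpos n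
  have hbpos : 0 < φ ^ m := pow_pos hφpos m
  have hcpos : 0 < P ^ n := pow_pos hPpos n
  have habsn : |ψ ^ n| = P ^ n := by rw [abs_pow, hPψ, abs_neg, abs_of_pos hPpos]
  have habsm : |ψ ^ m| = P ^ m := by rw [abs_pow, hPψ, abs_neg, abs_of_pos hPpos]
  have hun : ψ ^ n ≤ P ^ n := le_of_abs_le habsn.le
  have hvm : ψ ^ m ≤ P ^ m := le_of_abs_le habsm.le
  have habs : |ψ ^ n + ψ ^ m| ≤ P ^ n + P ^ m := by
    calc |ψ ^ n + ψ ^ m| ≤ |ψ ^ n| + |ψ ^ m| := abs_add_le _ _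
      _ = P ^ n + P ^ m := by rw [habsn, habsm]
  have key : (P ^ n + P ^ m) * φ ^ n < 2 * (φ ^ n + φ ^ m - ψ ^ n - ψ ^ m) := by
    rcases Nat.eq_zero_or_pos m with hm | hm
    · subst hm
      simp only [pow_zero]
      rcases eq_or_lt_of_le hn with hn1 | hn2
      · rw [← hn1]
        simp only [pow_one]
        have : ψ = -P := hPψ
        nlinarith [hPφ, hφ1, hPpos]
      · have hc2 : P ^ n ≤ P ^ 2 := pow_le_pow_of_le_one hPpos.le hP1.le hn2
        have ha2 : φ ^ 2 ≤ φ ^ n := pow_le_pow_right₀ hφ1.le hn2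
        have hP2 : P ^ 2 = 2 - φ := by
          rw [hP, goldenRatio]; linear_combination h5 / 4
        have hφ2 : φ ^ 2 = φ + 1 := goldenRatio_sq
        have hcP : P ^ n ≤ 2 - φ := hP2 ▸ hc2
        have ha2' : φ + 1 ≤ φ ^ n := hφ2 ▸ ha2
        have hunP : ψ ^ n ≤ 2 - φ := le_trans hun hcP
        nlinarith [hca, hunP, ha2', hgold]
    · have hbφ : φ ≤ φ ^ m := by
        calc φ = φ ^ 1 := (pow_one φ).symm
          _ ≤ φ ^ m := pow_le_pow_right₀ hφ1.le hm
      have haφ : φ ≤ φ ^ n := le_trans hbφ hba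
      have h1 : P ^ n * φ ^ m ≤ 1 := by
        calc P ^ n * φ ^ m ≤ P ^ n * φ ^ n :=
              mul_le_mul_of_nonneg_left hba hcpos.le
          _ = 1 := hca
      have h2 : ψ ^ n * φ ^ m ≤ 1 :=
        le_trans (mul_le_mul_of_nonneg_right hun hbpos.le) h1
      have h3 : ψ ^ m * φ ^ m ≤ 1 := by
        calc ψ ^ m * φ ^ m ≤ P ^ m * φ ^ m :=
              mul_le_mul_of_nonneg_right hvm hbpos.le
          _ = 1 := hdb
      rw [← mul_lt_mul_iff_left₀ hbpos]
      have hint1 : φ * φ ^ n ≤ φ ^ m * φ ^ n :=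
        mul_le_mul_of_nonneg_right hbφ hapos.le
      have hint2 : φ * φ ^ m ≤ φ ^ m * φ ^ m :=
        mul_le_mul_of_nonneg_right hbφ hbpos.le
      have hint3 : (1.6 : ℝ) * φ ^ n ≤ φ * φ ^ n :=
        mul_le_mul_of_nonneg_right hgold.le hapos.le
      have hint4 : (1.6 : ℝ) * φ ^ m ≤ φ * φ ^ m :=
        mul_le_mul_of_nonneg_right hgold.le hbpos.le
      have goal2 : φ ^ n + φ ^ m + 4 < 2 * (φ ^ m * φ ^ n) + 2 * (φ ^ m * φ ^ m) := by
        nlinarith [hint1, hint2, hint3, hint4, haφ, hbφ, hgold]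
      have E : (P ^ n + P ^ m) * φ ^ n * φ ^ m
          = (P ^ n * φ ^ n) * φ ^ m + (P ^ m * φ ^ m) * φ ^ n := by ring
      rw [E, hca, hdb, one_mul, one_mul]
      have E2 : 2 * (φ ^ n + φ ^ m - ψ ^ n - ψ ^ m) * φ ^ m
          = 2 * (φ ^ m * φ ^ n) + 2 * (φ ^ m * φ ^ m)
            - 2 * (ψ ^ n * φ ^ m) - 2 * (ψ ^ m * φ ^ m) := by ring
      rw [E2]
      linarith [h2, h3, goal2]
  calc |ψ ^ n + ψ ^ m| * φ ^ n ≤ (P ^ n + P ^ m) * φ ^ n :=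
        mul_le_mul_of_nonneg_right habs hapos.le
    _ < _ := key

theorem stmt15 (p q : ℕ) (hp : p.Prime) (hq : q.Prime)
    (n m x y : ℕ) (hnm : m ≤ n) (hn : 1 ≤ n)
    (he : Nat.fib n + Nat.fib m = p ^ x * q ^ y) :
    |((1 + Real.sqrt 5) / 2) ^ n * (1 + ((1 + Real.sqrt 5) / 2) ^ (-((n - m : ℕ) : ℤ))) /
        (Real.sqrt 5 * ((p : ℝ) ^ x * (q : ℝ) ^ y)) - 1| <
      2 / ((1 + Real.sqrt 5) / 2) ^ n := by
  show |φ ^ n * (1 + (φ : ℝ) ^ (-((n - m : ℕ) : ℤ))) /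
        (Real.sqrt 5 * ((p : ℝ) ^ x * (q : ℝ) ^ y)) - 1| < 2 / φ ^ n
  set N : ℝ := (p : ℝ) ^ x * (q : ℝ) ^ y with hNdef
  have hNe : ((Nat.fib n : ℝ) + (Nat.fib m : ℝ)) = N := by
    rw [hNdef]; exact_mod_cast congrArg (Nat.cast : ℕ → ℝ) he
  have hfib : ∀ k : ℕ, (Nat.fib k : ℝ) = (φ ^ k - ψ ^ k) / Real.sqrt 5 :=
    fun k => congrFun Real.coe_fib_eq' k
  have hs5pos : (0 : ℝ) < Real.sqrt 5 := Real.sqrt_pos.mpr (by norm_num)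
  have hNpos : 0 < N := by
    rw [← hNe]
    have h1 : 0 < Nat.fib n := Nat.fib_pos.mpr hn
    have h2 : (0 : ℝ) < (Nat.fib n : ℝ) := by exact_mod_cast h1
    have h3 : (0 : ℝ) ≤ (Nat.fib m : ℝ) := Nat.cast_nonneg _
    linarith
  have hD : (0 : ℝ) < Real.sqrt 5 * N := mul_pos hs5pos hNpos
  have hsN : Real.sqrt 5 * N = φ ^ n - ψ ^ n + (φ ^ m - ψ ^ m) := by
    rw [← hNe, hfib n, hfib m, ← add_div, mul_comm,
      div_mul_cancel₀ _ hs5pos.ne']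
  have hzpow : (φ : ℝ) ^ (-((n - m : ℕ) : ℤ)) = (φ ^ (n - m))⁻¹ := by
    rw [zpow_neg, zpow_natCast]
  have hk : m + (n - m) = n := Nat.add_sub_cancel' hnm
  have hmain : φ ^ n * (1 + (φ ^ (n - m))⁻¹) = φ ^ n + φ ^ m := by
    have h2 : φ ^ n * (φ ^ (n - m))⁻¹ = φ ^ m := by
      have hsplit : φ ^ n = φ ^ m * φ ^ (n - m) := by rw [← pow_add, hk]
      rw [hsplit, mul_inv_cancel_right₀ (pow_ne_zero _ goldenRatio_ne_zero)]
    rw [mul_add, mul_one, h2]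
  have hrw : φ ^ n * (1 + (φ : ℝ) ^ (-((n - m : ℕ) : ℤ))) / (Real.sqrt 5 * N) - 1
      = (ψ ^ n + ψ ^ m) / (Real.sqrt 5 * N) := by
    rw [hzpow, hmain, div_sub_one hD.ne', hsN]
    congr 1
    ring
  rw [hrw, abs_div, abs_of_pos hD, div_lt_div_iff₀ hD (pow_pos goldenRatio_pos n)]
  calc |ψ ^ n + ψ ^ m| * φ ^ n < 2 * (φ ^ n + φ ^ m - ψ ^ n - ψ ^ m) :=
        key15 n m hn hnm
    _ = 2 * (Real.sqrt 5 * N) := by rw [hsN]; ring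
end

section
/- Let a ≥ 1 be an odd integer such that the Fibonacci number F_a is odd (equivalently, 3 does not divide a). Then gcd(F_a, L_b) = 1 for every integer b ≥ 1. -/
lemma lucas_add_fib (n : ℕ) : lucas n + Nat.fib n = 2 * Nat.fib (n + 1) := by
  induction n using Nat.twoStepInduction with
  | zero => simp [lucas]
  | one => simp [lucas]
  | more n ih1 ih2 =>
    have h1 : Nat.fib (n + 2) = Nat.fib n + Nat.fib (n + 1) := Nat.fib_add_two
    have h2 : Nat.fib (n + 1 + 2) = Nat.fib (n + 1) + Nat.fib (n + 1 + 1) := Nat.fib_add_two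
    simp only [lucas, show n + 3 = n + 1 + 2 from rfl, show n + 2 + 1 = n + 1 + 2 from rfl] at *
    omega

lemma fib_two_mul_eq (n : ℕ) : Nat.fib (2 * n) = Nat.fib n * lucas n := by
  have h := Nat.fib_two_mul n
  have h2 := lucas_add_fib n
  have h3 : Nat.fib n ≤ Nat.fib (n + 1) := Nat.fib_le_fib_succ
  have : 2 * Nat.fib (n + 1) - Nat.fib n = lucas n := by omega
  rw [h, this]

theorem stmt18 (a : ℕ) (ha : 1 ≤ a) (haodd : Odd a) (hfib : Odd (Nat.fib a)) :
    ∀ b : ℕ, 1 ≤ b → Nat.gcd (Nat.fib a) (lucas b) = 1 := by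
  intro b hb
  set d := Nat.gcd (Nat.fib a) (lucas b) with hd
  have hdf : d ∣ Nat.fib a := Nat.gcd_dvd_left _ _
  have hdl : d ∣ lucas b := Nat.gcd_dvd_right _ _
  have hdfib2b : d ∣ Nat.fib (2 * b) := by
    rw [fib_two_mul_eq]
    exact hdl.mul_left _
  have hcop2 : Nat.Coprime 2 a := by
    exact haodd.coprime_two_left
  have hgcd : Nat.gcd a (2 * b) = Nat.gcd a b := Nat.Coprime.gcd_mul_left_cancel_right b hcop2
  have hdfibb : d ∣ Nat.fib b := by
    have h1 : d ∣ Nat.gcd (Nat.fib a) (Nat.fib (2 * b)) := Nat.dvd_gcd hdf hdfib2b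
    rw [← Nat.fib_gcd, hgcd] at h1
    exact h1.trans (Nat.fib_dvd _ _ (Nat.gcd_dvd_right a b))
  have hd2fib : d ∣ 2 * Nat.fib (b + 1) := by
    rw [← lucas_add_fib]
    exact Nat.dvd_add hdl hdfibb
  have hcopfib : Nat.Coprime d (Nat.fib (b + 1)) :=
    Nat.Coprime.coprime_dvd_left hdfibb (Nat.fib_coprime_fib_succ b)
  have hd2 : d ∣ 2 := (Nat.Coprime.dvd_of_dvd_mul_right hcopfib) hd2fib
  have hdodd : Odd d := hfib.of_dvd_nat hdf
  have hle : d ≤ 2 := Nat.le_of_dvd (by norm_num) hd2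
  interval_cases d
  · simp at hdodd
  · rfl
  · exact absurd hdodd (by decide)
end

section
/- For every integer m ≥ 3, the integer 5·F_m² + 4·(−1)^{m+1} is not a perfect square; that is, there is no integer t with t² = 5·F_m² + 4·(−1)^{m+1}. -/
lemma cassini (n : ℕ) : (Nat.fib n : ℤ) * Nat.fib (n+2) - (Nat.fib (n+1) : ℤ)^2 = (-1)^(n+1) := by
  induction n with
  | zero => simp
  | succ k ih =>
    have h : (Nat.fib (k+3) : ℤ) = Nat.fib (k+1) + Nat.fib (k+2) := by
      exact_mod_cast Nat.fib_add_two
    have h2 : (Nat.fib (k+2) : ℤ) = Nat.fib k + Nat.fib (k+1) := by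
      exact_mod_cast Nat.fib_add_two
    rw [show k+1+2=k+3 from rfl, h, show k+1+1 = k+2 from rfl, pow_succ]
    linear_combination (-1) * ih - (Nat.fib (k+2) : ℤ) * h2

theorem stmt19 (m : ℕ) (hm : 3 ≤ m) :
    ¬ ∃ t : ℤ, t ^ 2 = 5 * (Nat.fib m : ℤ) ^ 2 + 4 * (-1) ^ (m + 1) := by
  rintro ⟨t, ht⟩
  obtain ⟨n, rfl⟩ : ∃ n, m = n + 1 := ⟨m - 1, by omega⟩
  have hn : 2 ≤ n := by omega
  set L : ℤ := Nat.fib n + Nat.fib (n + 2) with hL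
  have hfib : (Nat.fib (n+2) : ℤ) = Nat.fib n + Nat.fib (n+1) := by
    exact_mod_cast Nat.fib_add_two
  have hcas := cassini n
  have hid : L ^ 2 = 5 * (Nat.fib (n+1) : ℤ) ^ 2 + 4 * (-1)^(n+1) := by
    rw [hL]; nlinarith [hcas, hfib]
  have hL4 : 4 ≤ L := by
    have h1 : 1 ≤ Nat.fib n := Nat.fib_pos.mpr (by omega)
    have h2 : 3 ≤ Nat.fib (n+2) := by
      calc 3 = Nat.fib 4 := rfl
      _ ≤ Nat.fib (n+2) := Nat.fib_mono (by omega)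
    rw [hL]; push_cast; omega
  -- t^2 = L^2 - 8 * (-1)^(n+1)
  have ht' : t ^ 2 = L ^ 2 - 8 * (-1)^(n+1) := by
    have hpow2 : ((-1:ℤ))^(n+1+1) = -(-1)^(n+1) := by rw [pow_succ]; ring
    rw [hpow2] at ht
    rw [hid]; linarith
  rcases Int.even_or_odd (n+1) with he | ho
  · -- (-1)^(n+1) = 1, t^2 = L^2 - 8, need L ≥ 7 i.e. n ≥ 3 (n+1 even, n odd ≥ 3)
    have hpow : ((-1:ℤ))^(n+1) = 1 := Even.neg_one_pow (by exact_mod_cast he)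
    rw [hpow] at ht'
    have hn3 : 3 ≤ n := by
      rcases he with ⟨k, hk⟩; omega
    have hL7 : 7 ≤ L := by
      have h1 : 2 ≤ Nat.fib n := by
        calc 2 = Nat.fib 3 := rfl
        _ ≤ Nat.fib n := Nat.fib_mono hn3
      have h2 : 5 ≤ Nat.fib (n+2) := by
        calc 5 = Nat.fib 5 := rfl
        _ ≤ Nat.fib (n+2) := Nat.fib_mono (by omega)
      rw [hL]; push_cast; omega
    -- t^2 = L^2 - 8, so |t| ≤ L - 1, t^2 ≤ L^2 - 2L + 1 ≤ L^2 - 13 < L^2 - 8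
    have habs : |t| ≤ L - 1 := by
      nlinarith [sq_abs t, abs_nonneg t]
    nlinarith [sq_abs t, abs_nonneg t]
  · have hpow : ((-1:ℤ))^(n+1) = -1 := Odd.neg_one_pow (by exact_mod_cast ho)
    rw [hpow] at ht'
    -- t^2 = L^2 + 8, |t| ≥ L + 1, t^2 ≥ L^2 + 2L + 1 ≥ L^2 + 9 > L^2 + 8
    have habs : L + 1 ≤ |t| := by
      nlinarith [sq_abs t, abs_nonneg t]
    nlinarith [sq_abs t]
end
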